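/- (Generation theorem.) Let E ⊆ ℤ^p be a good semigroup ideal with set of relative maximals RM(E). Let v ∈ ℤ^p be such that for every J ⊆ {1,…,p} with |J| = p − 1, the projection pr_J(v) lies in pr_J(E). Then v ∈ E if and only if for every relative maximal α ∈ RM(E), v ∉ Δ(α, ℤ^p). -/

import Mathlib

open Finset

def DeltaJ {p : ℕ} (J : Finset (Fin p)) (α : Fin p → ℤ) (E : Set (Fin p → ℤ)) :
    Set (Fin p → ℤ) :=
  {v | v ∈ E ∧ (∀ j ∈ J, v j = α j) ∧ ∀ j ∉ J, α j < v j}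

def Delta {p : ℕ} (α : Fin p → ℤ) (E : Set (Fin p → ℤ)) : Set (Fin p → ℤ) :=
  ⋃ i : Fin p, DeltaJ {i} α E

def GoodIdeal {p : ℕ} (E : Set (Fin p → ℤ)) : Prop :=
  (∃ lam nu : Fin p → ℤ, (∀ v ∈ E, lam ≤ v) ∧ ∀ v, nu ≤ v → v ∈ E) ∧
  (∀ a ∈ E, ∀ b ∈ E, a ⊓ b ∈ E) ∧
  (∀ a ∈ E, ∀ b ∈ E, a ≠ b → ∀ i, a i = b i →
    ∃ η ∈ E, a i < η i ∧ (∀ j, min (a j) (b j) ≤ η j) ∧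
      ∀ j, a j ≠ b j → η j = min (a j) (b j))

def RelMax {p : ℕ} (E : Set (Fin p → ℤ)) (α : Fin p → ℤ) : Prop :=
  α ∈ E ∧ Delta α E = ∅ ∧ ∀ J : Finset (Fin p), 2 ≤ J.card → (DeltaJ J α E).Nonempty

def AbsMax {p : ℕ} (E : Set (Fin p → ℤ)) (β : Fin p → ℤ) : Prop :=
  β ∈ E ∧ ∀ J : Finset (Fin p), J ≠ ∅ → J ≠ Finset.univ → DeltaJ J β E = ∅

namespace Stmt10Aux

lemma inf'_mem {p : ℕ} {E : Set (Fin p → ℤ)}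
    (hinf : ∀ a ∈ E, ∀ b ∈ E, a ⊓ b ∈ E) {ι : Type*} (s : Finset ι) (hs : s.Nonempty)
    (f : ι → (Fin p → ℤ)) (hf : ∀ i ∈ s, f i ∈ E) : s.inf' hs f ∈ E := by
  induction hs using Finset.Nonempty.cons_induction with
  | singleton a => simpa using hf a (by simp)
  | cons a s ha hs ih =>
      rw [Finset.inf'_cons hs]
      exact hinf _ (hf a (by simp)) _ (ih fun i hi => hf i (by simp [hi]))

section Main

variable {p : ℕ} {E : Set (Fin p → ℤ)} {v : Fin p → ℤ} {g : Fin p} {lam : Fin p → ℤ}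

/-- Step 4: existence of a dominator-free candidate. -/
lemma existsK
    (hinf : ∀ a ∈ E, ∀ b ∈ E, a ⊓ b ∈ E)
    (hlam : ∀ x ∈ E, ∀ j, lam j ≤ x j)
    (hvlam : ∀ j, lam j ≤ v j)
    (hAg : ∀ ξ ∈ E, ξ g = v g → ¬ ∀ j, j ≠ g → v j ≤ ξ j)
    (hw : ∀ l, l ≠ g → ∃ w ∈ E, (∀ j, j ≠ l → w j = v j) ∧ w l < v l)
    (hg' : ∃ l : Fin p, l ≠ g) :
    ∃ β ∈ E, β g = v g ∧ (∀ l, l ≠ g → β l < v l) ∧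
      (∀ θ ∈ E, θ g = v g → ¬ ∀ l, l ≠ g → β l < θ l) := by
  classical
  haveI : Nonempty (Fin p) := ⟨g⟩
  -- the property P
  set P : (Fin p → ℤ) → Prop := fun τ =>
    ∀ θ ∈ E, θ g = v g → (∀ l, l ≠ g → τ l < θ l) → ∀ l, l ≠ g → v l ≤ θ l with hP
  -- minimize the sum over the box
  have hbdd : ∃ b : ℤ, ∀ n : ℤ,
      (∃ τ : Fin p → ℤ, ((∀ l, lam l - 1 ≤ τ l) ∧ (∀ l, τ l ≤ v l - 1) ∧ P τ) ∧
        (∑ l, τ l) = n) → b ≤ n := by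
    refine ⟨∑ l, (lam l - 1), ?_⟩
    rintro n ⟨τ, ⟨hlo, -, -⟩, rfl⟩
    exact Finset.sum_le_sum fun i _ => hlo i
  have hinh : ∃ n : ℤ, ∃ τ : Fin p → ℤ,
      ((∀ l, lam l - 1 ≤ τ l) ∧ (∀ l, τ l ≤ v l - 1) ∧ P τ) ∧ (∑ l, τ l) = n := by
    refine ⟨∑ l, (v l - 1), fun l => v l - 1, ⟨?_, ?_, ?_⟩, rfl⟩
    · intro l; dsimp only; have := hvlam l; omega
    · intro l; dsimp only; exact le_rfl
    · intro θ _ _ hθ l hl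
      have := hθ l hl; dsimp only at this; omega
  obtain ⟨n₀, ⟨τ, ⟨hlo, hhi, hPτ⟩, hsum⟩, hmin⟩ := Int.exists_least_of_bdd hbdd hinh
  -- realizers for non-bottom coordinates
  have hθex : ∀ l₀, l₀ ≠ g → lam l₀ ≤ τ l₀ →
      ∃ θ ∈ E, θ g = v g ∧ θ l₀ = τ l₀ ∧ ∀ l, l ≠ g → l ≠ l₀ → τ l < θ l := by
    intro l₀ hl₀ hlam₀
    set τ' : Fin p → ℤ := Function.update τ l₀ (τ l₀ - 1) with hτ'
    have hτ'sum : (∑ l, τ' l) = n₀ - 1 := by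
      rw [hτ', Finset.sum_update_of_mem (Finset.mem_univ l₀)]
      rw [← hsum, ← Finset.sum_erase_add _ _ (Finset.mem_univ l₀),
        Finset.sdiff_singleton_eq_erase]
      ring
    have hnP : ¬ ∀ θ ∈ E, θ g = v g → (∀ l, l ≠ g → τ' l < θ l) →
        ∀ l, l ≠ g → v l ≤ θ l := by
      intro hPτ'
      have hboxlo : ∀ l, lam l - 1 ≤ τ' l := by
        intro l
        rcases eq_or_ne l l₀ with rfl | hne
        · rw [hτ', Function.update_self]; omega
        · rw [hτ', Function.update_of_ne hne]; exact hlo l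
      have hboxhi : ∀ l, τ' l ≤ v l - 1 := by
        intro l
        rcases eq_or_ne l l₀ with rfl | hne
        · rw [hτ', Function.update_self]; have := hhi l; omega
        · rw [hτ', Function.update_of_ne hne]; exact hhi l
      have := hmin _ ⟨τ', ⟨hboxlo, hboxhi, hPτ'⟩, hτ'sum⟩
      omega
    push_neg at hnP
    obtain ⟨θ, hθE, hθg, hθgt, m₀, hm₀g, hm₀⟩ := hnP
    have hθl₀ : τ l₀ ≤ θ l₀ := by
      have := hθgt l₀ hl₀
      rw [hτ', Function.update_self] at this; omega
    have hother : ∀ l, l ≠ g → l ≠ l₀ → τ l < θ l := by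
      intro l hl hne
      have := hθgt l hl
      rwa [hτ', Function.update_of_ne hne] at this
    have heq : θ l₀ = τ l₀ := by
      by_contra hne
      have hgt : ∀ l, l ≠ g → τ l < θ l := by
        intro l hl
        rcases eq_or_ne l l₀ with rfl | hne'
        · omega
        · exact hother l hl hne'
      exact absurd (hPτ θ hθE hθg hgt m₀ hm₀g) (by omega)
    exact ⟨θ, hθE, hθg, heq, hother⟩
  -- NB set
  set NB : Finset (Fin p) := (Finset.univ.erase g).filter (fun l => lam l ≤ τ l) with hNB
  have hNBmem : ∀ l, l ∈ NB ↔ (l ≠ g ∧ lam l ≤ τ l) := by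
    intro l; rw [hNB]; simp [Finset.mem_filter, Finset.mem_erase]
  have hNBne : NB.Nonempty := by
    by_contra hNBe
    rw [Finset.not_nonempty_iff_eq_empty] at hNBe
    obtain ⟨l', hl'⟩ := hg'
    obtain ⟨w, hwE, hweq, hwlt⟩ := hw l' hl'
    have : ∀ l, l ≠ g → τ l < w l := by
      intro l hl
      have hbot : ¬ (lam l ≤ τ l) := by
        intro hle
        have : l ∈ NB := (hNBmem l).2 ⟨hl, hle⟩
        rw [hNBe] at this; exact absurd this (Finset.notMem_empty l)
      have := hlam w hwE l; omega
    have := hPτ w hwE (hweq g (Ne.symm hl')) this l' hl'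
    omega
  -- choose realizers
  have hθex' : ∀ l₀ : Fin p, ∃ θ : Fin p → ℤ, l₀ ∈ NB →
      (θ ∈ E ∧ θ g = v g ∧ θ l₀ = τ l₀ ∧ ∀ l, l ≠ g → l ≠ l₀ → τ l < θ l) := by
    intro l₀
    by_cases h : l₀ ∈ NB
    · obtain ⟨hne, hble⟩ := (hNBmem l₀).1 h
      obtain ⟨θ, h1, h2, h3, h4⟩ := hθex l₀ hne hble
      exact ⟨θ, fun _ => ⟨h1, h2, h3, h4⟩⟩
    · exact ⟨v, fun h' => absurd h' h⟩
  choose θf hθf using hθex'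
  set β : Fin p → ℤ := NB.inf' hNBne θf with hβ
  have hβE : β ∈ E := inf'_mem hinf _ _ _ (fun l hl => (hθf l hl).1)
  have hβcoord : ∀ j, β j = NB.inf' hNBne (fun l => θf l j) := by
    intro j; rw [hβ]; exact Finset.inf'_apply hNBne θf j
  have hβg : β g = v g := by
    rw [hβcoord]
    apply le_antisymm
    · obtain ⟨l, hl⟩ := hNBne
      exact le_trans (Finset.inf'_le _ hl) (le_of_eq (hθf l hl).2.1)
    · exact Finset.le_inf' _ _ (fun l hl => le_of_eq (hθf l hl).2.1.symm)
  have hβNB : ∀ l ∈ NB, τ l ≤ β l := by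
    intro l hl
    rw [hβcoord]
    apply Finset.le_inf'
    intro m hm
    rcases eq_or_ne m l with rfl | hne
    · exact le_of_eq (hθf m hm).2.2.1.symm
    · exact le_of_lt ((hθf m hm).2.2.2 l ((hNBmem l).1 hl).1 (Ne.symm hne))
  -- witness function
  have hw' : ∀ l : Fin p, ∃ wl : Fin p → ℤ, l ≠ g →
      (wl ∈ E ∧ (∀ j, j ≠ l → wl j = v j) ∧ wl l < v l) := by
    intro l
    by_cases h : l ≠ g
    · obtain ⟨w, h1, h2, h3⟩ := hw l h
      exact ⟨w, fun _ => ⟨h1, h2, h3⟩⟩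
    · exact ⟨v, fun h' => absurd h' h⟩
  choose wf hwf using hw'
  -- capped element
  set capf : Fin p → (Fin p → ℤ) := fun l => if l ≠ g ∧ τ l < lam l then wf l else β with hcapf
  have hcapfE : ∀ l, capf l ∈ E := by
    intro l; rw [hcapf]
    by_cases h : l ≠ g ∧ τ l < lam l
    · simp only [if_pos h]; exact (hwf l h.1).1
    · simp only [if_neg h]; exact hβE
  set β2 : Fin p → ℤ := Finset.univ.inf' Finset.univ_nonempty capf with hβ2
  have hβ2E : β2 ∈ E := inf'_mem hinf _ _ _ (fun l _ => hcapfE l)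
  have hβ2coord : ∀ j, β2 j = Finset.univ.inf' Finset.univ_nonempty (fun l => capf l j) := by
    intro j; rw [hβ2]; exact Finset.inf'_apply _ capf j
  have hcapfg : ∀ l, capf l g = v g := by
    intro l; rw [hcapf]
    by_cases h : l ≠ g ∧ τ l < lam l
    · simp only [if_pos h]; exact (hwf l h.1).2.1 g (Ne.symm h.1)
    · simp only [if_neg h]; exact hβg
  have hβ2g : β2 g = v g := by
    rw [hβ2coord]
    apply le_antisymm
    · exact le_trans (Finset.inf'_le _ (Finset.mem_univ g)) (le_of_eq (hcapfg g))
    · exact Finset.le_inf' _ _ (fun l _ => le_of_eq (hcapfg l).symm)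
  have hβ2le : ∀ j, β2 j ≤ capf j j := fun j => by
    rw [hβ2coord]; exact Finset.inf'_le _ (Finset.mem_univ j)
  have hβ2lt : ∀ l, l ≠ g → β2 l < v l := by
    intro l hl
    by_cases h : τ l < lam l
    · have := hβ2le l
      rw [hcapf] at this
      simp only [if_pos (And.intro hl h)] at this
      exact lt_of_le_of_lt this (hwf l hl).2.2
    · have hNBl : l ∈ NB := (hNBmem l).2 ⟨hl, by omega⟩
      have h1 : β2 l ≤ β l := by
        have := hβ2le l
        rw [hcapf] at this
        simp only [if_neg (fun hc : l ≠ g ∧ τ l < lam l => h hc.2)] at this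
        exact this
      have h2 : β l ≤ τ l := by
        rw [hβcoord]
        exact le_trans (Finset.inf'_le _ hNBl) (le_of_eq (hθf l hNBl).2.2.1)
      have := hhi l; omega
  have hβ2ge : ∀ l, l ∈ NB → τ l ≤ β2 l := by
    intro l hl
    rw [hβ2coord]
    apply Finset.le_inf'
    intro m _
    rw [hcapf]
    by_cases h : m ≠ g ∧ τ m < lam m
    · simp only [if_pos h]
      rcases eq_or_ne m l with rfl | hne
      · exact absurd ((hNBmem m).1 hl).2 (by omega)
      · rw [(hwf m h.1).2.1 l (Ne.symm hne)]
        have := hhi l; omega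
    · simp only [if_neg h]; exact hβNB l hl
  refine ⟨β2, hβ2E, hβ2g, hβ2lt, ?_⟩
  intro θ hθE hθg hdom
  have hgt : ∀ l, l ≠ g → τ l < θ l := by
    intro l hl
    by_cases h : lam l ≤ τ l
    · exact lt_of_le_of_lt (hβ2ge l ((hNBmem l).2 ⟨hl, h⟩)) (hdom l hl)
    · have := hlam θ hθE l; omega
  exact hAg θ hθE hθg (fun j hj => hPτ θ hθE hθg hgt j hj)

/-- Step 5: a Σ-minimal dominator-free candidate has attained maxima. -/
lemma existsHarmonious
    (hinf : ∀ a ∈ E, ∀ b ∈ E, a ⊓ b ∈ E)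
    (hlam : ∀ x ∈ E, ∀ j, lam j ≤ x j)
    (hw : ∀ l, l ≠ g → ∃ w ∈ E, (∀ j, j ≠ l → w j = v j) ∧ w l < v l)
    (hK : ∃ β ∈ E, β g = v g ∧ (∀ l, l ≠ g → β l < v l) ∧
      (∀ θ ∈ E, θ g = v g → ¬ ∀ l, l ≠ g → β l < θ l)) :
    ∃ β ∈ E, β g = v g ∧ (∀ l, l ≠ g → β l < v l) ∧
      (∀ θ ∈ E, θ g = v g → ¬ ∀ l, l ≠ g → β l < θ l) ∧
      (∀ l, l ≠ g → ∃ ζ ∈ E, ζ g = v g ∧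
        (∀ m, m ≠ g → m ≠ l → β m < ζ m) ∧ ζ l = β l) := by
  classical
  haveI : Nonempty (Fin p) := ⟨g⟩
  -- minimize the sum over K
  have hbdd : ∃ b : ℤ, ∀ n : ℤ,
      (∃ β, (β ∈ E ∧ β g = v g ∧ (∀ l, l ≠ g → β l < v l) ∧
        (∀ θ ∈ E, θ g = v g → ¬ ∀ l, l ≠ g → β l < θ l)) ∧ (∑ l, β l) = n) → b ≤ n := by
    refine ⟨∑ l, lam l, ?_⟩
    rintro n ⟨β, ⟨hβE, -, -, -⟩, rfl⟩
    exact Finset.sum_le_sum fun i _ => hlam β hβE i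
  have hinh : ∃ n : ℤ, ∃ β, (β ∈ E ∧ β g = v g ∧ (∀ l, l ≠ g → β l < v l) ∧
      (∀ θ ∈ E, θ g = v g → ¬ ∀ l, l ≠ g → β l < θ l)) ∧ (∑ l, β l) = n := by
    obtain ⟨β, h1, h2, h3, h4⟩ := hK
    exact ⟨∑ l, β l, β, ⟨h1, h2, h3, h4⟩, rfl⟩
  obtain ⟨n₀, ⟨β, ⟨hβE, hβg, hβlt, hβnd⟩, hsum⟩, hmin⟩ := Int.exists_least_of_bdd hbdd hinh
  refine ⟨β, hβE, hβg, hβlt, hβnd, ?_⟩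
  intro l hl
  -- the values of the l-th coordinate over F_l(β)
  have hTbdd : ∃ b : ℤ, ∀ t : ℤ,
      (∃ ζ ∈ E, ζ g = v g ∧ (∀ m, m ≠ g → m ≠ l → β m < ζ m) ∧ ζ l = t) → t ≤ b := by
    refine ⟨β l, ?_⟩
    rintro t ⟨ζ, hζE, hζg, hζgt, rfl⟩
    by_contra hgt
    push_neg at hgt
    exact hβnd ζ hζE hζg (fun m hm => by
      rcases eq_or_ne m l with rfl | hne
      · exact hgt
      · exact hζgt m hm hne)
  have hTinh : ∃ t : ℤ,
      ∃ ζ ∈ E, ζ g = v g ∧ (∀ m, m ≠ g → m ≠ l → β m < ζ m) ∧ ζ l = t := by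
    obtain ⟨w, hwE, hweq, hwlt⟩ := hw l hl
    exact ⟨w l, w, hwE, hweq g (Ne.symm hl), fun m hm hml => by
      rw [hweq m hml]; exact hβlt m hm, rfl⟩
  obtain ⟨t, ⟨ζ, hζE, hζg, hζgt, hζl⟩, hmax⟩ := Int.exists_greatest_of_bdd hTbdd hTinh
  have htle : t ≤ β l := by
    by_contra hgt
    push_neg at hgt
    refine hβnd ζ hζE hζg (fun m hm => ?_)
    rcases eq_or_ne m l with rfl | hne
    · omega
    · exact hζgt m hm hne
  rcases eq_or_lt_of_le htle with heq | hlt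
  · exact ⟨ζ, hζE, hζg, hζgt, by rw [hζl, heq]⟩
  · -- lower β at l, contradicting minimality
    exfalso
    set βn : Fin p → ℤ := β ⊓ ζ with hβn
    have hβnc : ∀ j, βn j = min (β j) (ζ j) := fun j => by
      rw [hβn]; rw [Pi.inf_apply]
    have hβnE : βn ∈ E := hinf β hβE ζ hζE
    have hβng : βn g = v g := by rw [hβnc, hβg, hζg, min_self]
    have hβnco : ∀ m, m ≠ g → m ≠ l → βn m = β m := by
      intro m hm hml
      rw [hβnc]
      exact min_eq_left (le_of_lt (hζgt m hm hml))
    have hβnl : βn l = t := by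
      rw [hβnc, hζl]
      exact min_eq_right (le_of_lt hlt)
    have hβnlt : ∀ m, m ≠ g → βn m < v m := by
      intro m hm
      rw [hβnc]
      exact lt_of_le_of_lt (min_le_left _ _) (hβlt m hm)
    have hβnnd : ∀ θ ∈ E, θ g = v g → ¬ ∀ m, m ≠ g → βn m < θ m := by
      intro θ hθE hθg hdom
      have hθt : θ l ≤ t := by
        refine hmax (θ l) ⟨θ, hθE, hθg, ?_, rfl⟩
        intro m hm hml
        have := hdom m hm
        rwa [hβnco m hm hml] at this
      have := hdom l hl
      rw [hβnl] at this
      omega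
    have hsumlt : (∑ m, βn m) < n₀ := by
      rw [← hsum]
      apply Finset.sum_lt_sum
      · intro i _
        rw [hβnc]; exact min_le_left _ _
      · exact ⟨l, Finset.mem_univ l, by rw [hβnl]; omega⟩
    have := hmin _ ⟨βn, ⟨hβnE, hβng, hβnlt, hβnnd⟩, rfl⟩
    omega

/-- Step 6: a harmonious dominator-free candidate is a relative maximal. -/
lemma relMaxOfHarmonious {β : Fin p → ℤ}
    (hinf : ∀ a ∈ E, ∀ b ∈ E, a ⊓ b ∈ E)
    (hE2 : ∀ a ∈ E, ∀ b ∈ E, a ≠ b → ∀ i, a i = b i →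
      ∃ η ∈ E, a i < η i ∧ (∀ j, min (a j) (b j) ≤ η j) ∧
        ∀ j, a j ≠ b j → η j = min (a j) (b j))
    (hβE : β ∈ E) (hβg : β g = v g)
    (hnd : ∀ θ ∈ E, θ g = v g → ¬ ∀ l, l ≠ g → β l < θ l)
    (hAT : ∀ l, l ≠ g → ∃ ζ ∈ E, ζ g = v g ∧
      (∀ m, m ≠ g → m ≠ l → β m < ζ m) ∧ ζ l = β l) :
    RelMax E β := by
  classical
  have hATtot : ∀ l, ∃ ζ, l ≠ g →
      (ζ ∈ E ∧ ζ g = v g ∧ (∀ m, m ≠ g → m ≠ l → β m < ζ m) ∧ ζ l = β l) := by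
    intro l
    by_cases hl : l ≠ g
    · obtain ⟨ζ, h1, h2, h3, h4⟩ := hAT l hl
      exact ⟨ζ, fun _ => ⟨h1, h2, h3, h4⟩⟩
    · exact ⟨β, fun h => absurd h hl⟩
  choose ζf hζf using hATtot
  -- Delta β E is empty
  have hΔ : ∀ x, x ∉ Delta β E := by
    intro x hx
    rw [Delta, Set.mem_iUnion] at hx
    obtain ⟨i, hx⟩ := hx
    obtain ⟨hxE, hxeq, hxgt⟩ := hx
    have hxeq' : x i = β i := hxeq i (Finset.mem_singleton_self i)
    have hxgt' : ∀ j, j ≠ i → β j < x j := fun j hj =>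
      hxgt j (Finset.notMem_singleton.2 hj)
    rcases eq_or_ne i g with rfl | hig
    · exact hnd x hxE (hxeq'.trans hβg) (fun l hl => hxgt' l hl)
    · obtain ⟨hζE, hζg, hζgt, hζl⟩ := hζf i hig
      have hvg : v g < x g := hβg ▸ hxgt' g (Ne.symm hig)
      have hne : x ≠ ζf i := by
        intro h
        rw [h, hζg] at hvg
        exact lt_irrefl _ hvg
      have hxi : x i = ζf i i := by rw [hxeq', hζl]
      obtain ⟨η, hηE, hηi, hηmin, hηeq⟩ := hE2 x hxE (ζf i) hζE hne i hxi
      have hηg : η g = v g := by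
        have hne' : x g ≠ ζf i g := by rw [hζg]; omega
        rw [hηeq g hne', hζg]
        exact min_eq_right (le_of_lt hvg)
      refine hnd η hηE hηg (fun m hm => ?_)
      rcases eq_or_ne m i with rfl | hmi
      · exact hxeq' ▸ hηi
      · exact lt_of_lt_of_le (lt_min (hxgt' m hmi) (hζgt m hm hmi)) (hηmin m)
  -- pairs containing g
  have hpairg : ∀ l, l ≠ g → ζf l ∈ DeltaJ ({g, l} : Finset (Fin p)) β E := by
    intro l hl
    obtain ⟨hζE, hζg, hζgt, hζl⟩ := hζf l hl
    refine ⟨hζE, ?_, ?_⟩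
    · intro j hj
      rcases Finset.mem_insert.1 hj with rfl | hj'
      · rw [hζg, hβg]
      · rw [Finset.mem_singleton.1 hj', hζl]
    · intro j hj
      rw [Finset.mem_insert, Finset.mem_singleton] at hj
      push_neg at hj
      exact hζgt j hj.1 hj.2
  -- pairs avoiding g
  have hpairng : ∀ a b : Fin p, a ≠ g → b ≠ g → a ≠ b →
      ∃ w, w ∈ DeltaJ ({a, b} : Finset (Fin p)) β E := by
    intro a b hag hbg hab
    obtain ⟨haE, hagv, hagt, hal⟩ := hζf a hag
    obtain ⟨hbE, hbgv, hbgt, hbl⟩ := hζf b hbg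
    set δ : Fin p → ℤ := ζf a ⊓ ζf b with hδ
    have hδc : ∀ j, δ j = min (ζf a j) (ζf b j) := fun j => by
      rw [hδ]; rw [Pi.inf_apply]
    have hδE : δ ∈ E := hinf _ haE _ hbE
    have hδa : δ a = β a := by
      rw [hδc, hal]
      exact min_eq_left (le_of_lt (hbgt a hag hab))
    have hδb : δ b = β b := by
      rw [hδc, hbl]
      exact min_eq_right (le_of_lt (hagt b hbg (Ne.symm hab)))
    have hδg : δ g = v g := by rw [hδc, hagv, hbgv, min_self]
    have hδm : ∀ m, m ≠ g → m ≠ a → m ≠ b → β m < δ m := by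
      intro m h1 h2 h3
      rw [hδc]
      exact lt_min (hagt m h1 h2) (hbgt m h1 h3)
    have hne : δ ≠ ζf a := by
      intro h
      have : δ b = ζf a b := by rw [h]
      rw [hδb] at this
      exact absurd (this ▸ hagt b hbg (Ne.symm hab)) (lt_irrefl _)
    have hδga : δ g = ζf a g := by rw [hδg, hagv]
    obtain ⟨η, hηE, hηg, hηmin, hηeq⟩ := hE2 δ hδE (ζf a) haE hne g hδga
    rw [hδg] at hηg
    have hηb : η b = β b := by
      have hne' : δ b ≠ ζf a b := by
        rw [hδb]
        exact ne_of_lt (hagt b hbg (Ne.symm hab))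
      rw [hηeq b hne', hδb]
      exact min_eq_left (le_of_lt (hagt b hbg (Ne.symm hab)))
    have hηm : ∀ m, m ≠ g → m ≠ a → m ≠ b → β m < η m := by
      intro m h1 h2 h3
      exact lt_of_lt_of_le (lt_min (hδm m h1 h2 h3) (hagt m h1 h2)) (hηmin m)
    have hηa : β a ≤ η a := by
      have := hηmin a
      rw [hδa, hal, min_self] at this
      exact this
    rcases eq_or_lt_of_le hηa with heq | hlt
    · refine ⟨η, hηE, ?_, ?_⟩
      · intro j hj
        rcases Finset.mem_insert.1 hj with rfl | hj'
        · exact heq.symm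
        · rw [Finset.mem_singleton.1 hj']; exact hηb
      · intro j hj
        rw [Finset.mem_insert, Finset.mem_singleton] at hj
        push_neg at hj
        rcases eq_or_ne j g with rfl | hjg
        · exact hβg ▸ hηg
        · exact hηm j hjg hj.1 hj.2
    · exfalso
      refine hΔ η ?_
      rw [Delta, Set.mem_iUnion]
      refine ⟨b, hηE, ?_, ?_⟩
      · intro j hj
        rw [Finset.mem_singleton.1 hj]; exact hηb
      · intro j hj
        rw [Finset.notMem_singleton] at hj
        rcases eq_or_ne j g with rfl | hjg
        · exact hβg ▸ hηg
        · rcases eq_or_ne j a with rfl | hja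
          · exact hlt
          · exact hηm j hjg hja hj
  refine ⟨hβE, Set.eq_empty_iff_forall_notMem.2 hΔ, ?_⟩
  intro J hJ
  have hJne : J.Nonempty := Finset.card_pos.1 (by omega)
  obtain ⟨j₀, hj₀⟩ := hJne
  have hJ'ne : (J.erase j₀).Nonempty := by
    rw [← Finset.card_pos, Finset.card_erase_of_mem hj₀]
    omega
  have hpair : ∀ k, ∃ wk, k ∈ J.erase j₀ → wk ∈ DeltaJ ({j₀, k} : Finset (Fin p)) β E := by
    intro k
    by_cases hk : k ∈ J.erase j₀
    · have hkj₀ : k ≠ j₀ := (Finset.mem_erase.1 hk).1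
      rcases eq_or_ne j₀ g with rfl | hj₀g
      · exact ⟨ζf k, fun _ => hpairg k hkj₀⟩
      · rcases eq_or_ne k g with rfl | hkg
        · refine ⟨ζf j₀, fun _ => ?_⟩
          rw [Finset.pair_comm]
          exact hpairg j₀ hj₀g
        · obtain ⟨w, hw⟩ := hpairng j₀ k hj₀g hkg (Ne.symm hkj₀)
          exact ⟨w, fun _ => hw⟩
    · exact ⟨β, fun h => absurd h hk⟩
  choose wk hwk using hpair
  set W : Fin p → ℤ := (J.erase j₀).inf' hJ'ne wk with hW
  have hWc : ∀ j, W j = (J.erase j₀).inf' hJ'ne (fun k => wk k j) := by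
    intro j; rw [hW]; exact Finset.inf'_apply hJ'ne wk j
  have hmemJ : ∀ k ∈ J.erase j₀, ∀ j ∈ ({j₀, k} : Finset (Fin p)), wk k j = β j :=
    fun k hk => (hwk k hk).2.1
  have hgtJ : ∀ k ∈ J.erase j₀, ∀ j, j ∉ ({j₀, k} : Finset (Fin p)) → β j < wk k j :=
    fun k hk => (hwk k hk).2.2
  refine ⟨W, inf'_mem hinf _ _ _ (fun k hk => (hwk k hk).1), ?_, ?_⟩
  · intro j hj
    rcases eq_or_ne j j₀ with rfl | hjj₀
    · rw [hWc]
      apply le_antisymm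
      · obtain ⟨k, hk⟩ := hJ'ne
        exact le_trans (Finset.inf'_le _ hk)
          (le_of_eq (hmemJ k hk j (Finset.mem_insert_self _ _)))
      · apply Finset.le_inf'
        intro k hk
        exact le_of_eq (hmemJ k hk j (Finset.mem_insert_self _ _)).symm
    · have hjJ' : j ∈ J.erase j₀ := Finset.mem_erase.2 ⟨hjj₀, hj⟩
      rw [hWc]
      apply le_antisymm
      · exact le_trans (Finset.inf'_le _ hjJ')
          (le_of_eq (hmemJ j hjJ' j (by simp)))
      · apply Finset.le_inf'
        intro k hk
        rcases eq_or_ne k j with hkj | hkj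
        · refine le_of_eq (hmemJ k hk j ?_).symm
          rw [hkj]
          simp
        · refine le_of_lt (hgtJ k hk j ?_)
          rw [Finset.mem_insert, Finset.mem_singleton]
          push_neg
          exact ⟨hjj₀, Ne.symm hkj⟩
  · intro j hj
    rw [hWc, Finset.lt_inf'_iff]
    intro k hk
    refine hgtJ k hk j ?_
    rw [Finset.mem_insert, Finset.mem_singleton]
    push_neg
    refine ⟨?_, ?_⟩
    · intro h; exact hj (h ▸ hj₀)
    · intro h; exact hj (h ▸ (Finset.mem_erase.1 hk).2)

end Main

end Stmt10Aux

theorem stmt10 {p : ℕ} (hp : 2 ≤ p) (E : Set (Fin p → ℤ)) (hE : GoodIdeal E)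
    (v : Fin p → ℤ)
    (hpr : ∀ J : Finset (Fin p), J.card = p - 1 → ∃ w ∈ E, ∀ j ∈ J, w j = v j) :
    v ∈ E ↔ ∀ α, RelMax E α → v ∉ Delta α Set.univ := by
  obtain ⟨⟨lam, nu, hlam, hnu⟩, hinf, hE2⟩ := hE
  have hlam' : ∀ x ∈ E, ∀ j, lam j ≤ x j := fun x hx j => hlam x hx j
  constructor
  · rintro hv α hα hvΔ
    rw [Delta, Set.mem_iUnion] at hvΔ
    obtain ⟨i, hvΔ⟩ := hvΔ
    obtain ⟨-, hvi, hvgt⟩ := hvΔ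
    have hvmem : v ∈ Delta α E := by
      rw [Delta, Set.mem_iUnion]
      exact ⟨i, hv, hvi, hvgt⟩
    rw [hα.2.1] at hvmem
    exact hvmem
  · intro hRHS
    by_contra hv
    have hp1 : 1 < Fintype.card (Fin p) := by rw [Fintype.card_fin]; omega
    have hcard : ∀ l : Fin p, (Finset.univ.erase l).card = p - 1 := by
      intro l
      rw [Finset.card_erase_of_mem (Finset.mem_univ l), Finset.card_univ, Fintype.card_fin]
    have hvlam : ∀ j, lam j ≤ v j := by
      intro j
      obtain ⟨l, hl⟩ := Fintype.exists_ne_of_one_lt_card hp1 j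
      obtain ⟨w, hwE, hweq⟩ := hpr (Finset.univ.erase l) (hcard l)
      have hwj : w j = v j := hweq j (Finset.mem_erase.2 ⟨Ne.symm hl, Finset.mem_univ j⟩)
      rw [← hwj]
      exact hlam' w hwE j
    have hgex : ∃ g : Fin p, ¬ ∃ ξ ∈ E, ξ g = v g ∧ ∀ j, j ≠ g → v j ≤ ξ j := by
      by_contra hall
      push_neg at hall
      choose ξ hξE hξeq hξge using hall
      haveI : Nonempty (Fin p) := ⟨⟨0, by omega⟩⟩
      have hveq : Finset.univ.inf' Finset.univ_nonempty ξ = v := by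
        funext j
        rw [Finset.inf'_apply]
        apply le_antisymm
        · exact le_trans (Finset.inf'_le _ (Finset.mem_univ j)) (le_of_eq (hξeq j))
        · apply Finset.le_inf'
          intro m _
          rcases eq_or_ne m j with rfl | hne
          · exact le_of_eq (hξeq m).symm
          · exact hξge m j (Ne.symm hne)
      exact hv (hveq ▸ Stmt10Aux.inf'_mem hinf _ _ _ (fun m _ => hξE m))
    obtain ⟨g, hg⟩ := hgex
    have hAg : ∀ ξ ∈ E, ξ g = v g → ¬ ∀ j, j ≠ g → v j ≤ ξ j := by
      intro ξ h1 h2 h3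
      exact hg ⟨ξ, h1, h2, h3⟩
    have hw : ∀ l, l ≠ g → ∃ w ∈ E, (∀ j, j ≠ l → w j = v j) ∧ w l < v l := by
      intro l hl
      obtain ⟨w, hwE, hweq⟩ := hpr (Finset.univ.erase l) (hcard l)
      have hweq' : ∀ j, j ≠ l → w j = v j := fun j hj =>
        hweq j (Finset.mem_erase.2 ⟨hj, Finset.mem_univ j⟩)
      rcases lt_trichotomy (w l) (v l) with h | h | h
      · exact ⟨w, hwE, hweq', h⟩
      · exfalso
        apply hv
        have hwv : w = v := funext fun j => by
          rcases eq_or_ne j l with rfl | hj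
          · exact h
          · exact hweq' j hj
        exact hwv ▸ hwE
      · exfalso
        refine hAg w hwE (hweq' g (Ne.symm hl)) (fun j hj => ?_)
        rcases eq_or_ne j l with rfl | hjl
        · exact le_of_lt h
        · exact le_of_eq (hweq' j hjl).symm
    have hg' : ∃ l : Fin p, l ≠ g := Fintype.exists_ne_of_one_lt_card hp1 g
    obtain ⟨β, hβE, hβg, hβlt, hβnd, hβAT⟩ :=
      Stmt10Aux.existsHarmonious hinf hlam' hw
        (Stmt10Aux.existsK hinf hlam' hvlam hAg hw hg')
    have hRM : RelMax E β := Stmt10Aux.relMaxOfHarmonious hinf hE2 hβE hβg hβnd hβAT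
    refine hRHS β hRM ?_
    rw [Delta, Set.mem_iUnion]
    refine ⟨g, trivial, ?_, ?_⟩
    · intro j hj
      rw [Finset.mem_singleton.1 hj, hβg]
    · intro j hj
      rw [Finset.notMem_singleton] at hj
      exact hβlt j hj
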